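/- Let K be a number field with ring of integers O_K and 𝔫 a nonzero ideal. For a positive integer k, define φ_k(𝔫) as the number of k-tuples (a₁,…,a_k) of units of O_K/𝔫 such that a₁+⋯+a_k is also a unit of O_K/𝔫. Then φ_k(𝔫) = φ(𝔫)^k · ∏_{𝔭 | 𝔫} (1 − 1/(N(𝔭)−1) + 1/(N(𝔭)−1)² + ⋯ + (−1)^{k−1}/(N(𝔭)−1)^{k−1}). -/

import Mathlib

open Finset

/-- The type of `k`-tuples of units with unit sum, phrased with subtypes of `R`. -/
private abbrev UT (R : Type*) [CommRing R] (k : ℕ) : Type _ :=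
  {v : Fin k → R // (∀ i, IsUnit (v i)) ∧ IsUnit (∑ i, v i)}

private lemma card_split {α : Type*} [Finite α] (p : α → Prop) :
    Nat.card {x // p x} + Nat.card {x // ¬ p x} = Nat.card α := by
  classical
  rw [← Nat.card_sum, Nat.card_congr (Equiv.sumCompl p)]

private lemma isUnit_pi_iff {ι : Type*} {R : ι → Type*} [∀ i, CommRing (R i)]
    (x : ∀ i, R i) : IsUnit x ↔ ∀ i, IsUnit (x i) := by
  constructor
  · exact fun h i => h.map (Pi.evalRingHom R i)
  · intro h
    refine isUnit_iff_exists_inv.mpr ⟨fun i => ((h i).unit⁻¹ : (R i)ˣ), funext fun i => ?_⟩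
    exact (h i).mul_val_inv

/-- Units-subtype version of the original statement's type. -/
private noncomputable def utEquiv (R : Type*) [CommRing R] (k : ℕ) :
    {v : Fin k → Rˣ // IsUnit (∑ i, (v i : R))} ≃ UT R k where
  toFun v := ⟨fun i => (v.1 i : R), fun i => (v.1 i).isUnit, v.2⟩
  invFun w := ⟨fun i => (w.2.1 i).unit, by
    have : (fun i => ((w.2.1 i).unit : R)) = w.1 := funext fun i => (w.2.1 i).unit_spec
    simpa [this] using w.2.2⟩
  left_inv v := by
    apply Subtype.ext; funext i; apply Units.ext; simp
  right_inv w := by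
    apply Subtype.ext; funext i; exact (w.2.1 i).unit_spec

private noncomputable def unitsEquivSubtype (R : Type*) [CommRing R] : Rˣ ≃ {x : R // IsUnit x} where
  toFun u := ⟨u, u.isUnit⟩
  invFun x := x.2.unit
  left_inv u := Units.ext u.isUnit.unit_spec
  right_inv x := Subtype.ext x.2.unit_spec

/-- Multiplicativity of the count over a finite product of rings. -/
private def utPiEquiv {ι : Type*} (R : ι → Type*) [∀ i, CommRing (R i)] (k : ℕ) :
    UT (∀ i, R i) k ≃ ∀ i, UT (R i) k where
  toFun v i := ⟨fun j => v.1 j i, fun j => (isUnit_pi_iff (v.1 j)).mp (v.2.1 j) i, by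
    have := (isUnit_pi_iff _).mp v.2.2 i
    simpa [Finset.sum_apply] using this⟩
  invFun f := ⟨fun j i => (f i).1 j, fun j => (isUnit_pi_iff _).mpr fun i => (f i).2.1 j,
    (isUnit_pi_iff _).mpr fun i => by simpa [Finset.sum_apply] using (f i).2.2⟩
  left_inv v := rfl
  right_inv f := rfl

/-- Invariance under ring equivalence. -/
private def utCongr {R S : Type*} [CommRing R] [CommRing S] (e : R ≃+* S) (k : ℕ) :
    UT R k ≃ UT S k := by
  refine Equiv.subtypeEquiv (Equiv.piCongrRight fun _ => e.toEquiv) fun v => ?_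
  have hiff : ∀ x : R, IsUnit (e x) ↔ IsUnit x := fun x =>
    ⟨fun h => by simpa using h.map e.symm.toRingHom, fun h => h.map e.toRingHom⟩
  show _ ↔ (∀ i, IsUnit (e (v i))) ∧ IsUnit (∑ i : Fin k, e (v i))
  rw [show (∑ i : Fin k, e (v i)) = e (∑ i : Fin k, v i) from (map_sum e.toRingHom v univ).symm]
  exact and_congr (forall_congr' fun i => (hiff _).symm) (hiff _).symm

section Local

variable {R : Type*} [CommRing R] [Finite R]

private def utNonunitEquiv (k : ℕ)
    (hloc : ∀ x y : R, ¬ IsUnit x → IsUnit y → IsUnit (x + y)) :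
    {v : Fin (k+1) → R // (∀ i, IsUnit (v i)) ∧ ¬ IsUnit (∑ i, v i)} ≃
      {x : R // ¬ IsUnit x} × UT R k where
  toFun v := (⟨∑ i, v.1 i, v.2.2⟩,
    ⟨Fin.init v.1, fun i => v.2.1 _, by
      by_contra h
      refine v.2.2 ?_
      have h2 := hloc _ _ h (v.2.1 (Fin.last k))
      rwa [show (∑ i, Fin.init v.1 i) + v.1 (Fin.last k) = ∑ i, v.1 i by
        rw [Fin.sum_univ_castSucc (f := v.1)]; rfl] at h2⟩)
  invFun p := ⟨Fin.snoc p.2.1 (p.1.1 - ∑ i, p.2.1 i), by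
    constructor
    · intro i
      refine Fin.lastCases ?_ ?_ i
      · rw [Fin.snoc_last, sub_eq_add_neg]
        exact hloc _ _ p.1.2 p.2.2.2.neg
      · intro j; rw [Fin.snoc_castSucc]; exact p.2.2.1 j
    · rw [Fin.sum_univ_castSucc]
      simp only [Fin.snoc_castSucc, Fin.snoc_last]
      rw [add_sub_cancel]
      exact p.1.2⟩
  left_inv v := by
    apply Subtype.ext
    have : (∑ i, v.1 i) - ∑ i, Fin.init v.1 i = v.1 (Fin.last k) := by
      rw [Fin.sum_univ_castSucc (f := v.1)]
      show (∑ i : Fin k, Fin.init v.1 i) + _ - _ = _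
      ring
    show Fin.snoc (Fin.init v.1) _ = v.1
    rw [this, Fin.snoc_init_self]
  right_inv p := by
    have hsum : ∑ i, (Fin.snoc p.2.1 (p.1.1 - ∑ i, p.2.1 i) : Fin (k+1) → R) i = p.1.1 := by
      rw [Fin.sum_univ_castSucc]
      simp only [Fin.snoc_castSucc, Fin.snoc_last]
      rw [add_sub_cancel]
    refine Prod.ext (Subtype.ext hsum) (Subtype.ext ?_)
    dsimp only
    exact Fin.init_snoc _ _

private lemma ut_card_succ (k : ℕ)
    (hloc : ∀ x y : R, ¬ IsUnit x → IsUnit y → IsUnit (x + y)) :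
    Nat.card (UT R (k+1)) + Nat.card {x : R // ¬ IsUnit x} * Nat.card (UT R k)
      = Nat.card {x : R // IsUnit x} ^ (k+1) := by
  classical
  have h1 : Nat.card {v : Fin (k+1) → R // ∀ i, IsUnit (v i)}
      = Nat.card {x : R // IsUnit x} ^ (k+1) := by
    rw [Nat.card_congr (Equiv.subtypePiEquivPi), Nat.card_pi]
    simp
  have h2 := card_split (α := {v : Fin (k+1) → R // ∀ i, IsUnit (v i)})
    (fun w => IsUnit (∑ i, w.1 i))
  rw [Nat.card_congr (Equiv.subtypeSubtypeEquivSubtypeInter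
      (fun v : Fin (k+1) → R => ∀ i, IsUnit (v i)) (fun v => IsUnit (∑ i, v i))),
    Nat.card_congr (Equiv.subtypeSubtypeEquivSubtypeInter
      (fun v : Fin (k+1) → R => ∀ i, IsUnit (v i)) (fun v => ¬ IsUnit (∑ i, v i))),
    h1] at h2
  rw [← h2, Nat.card_congr (utNonunitEquiv k hloc), Nat.card_prod]

private def utOneEquiv : UT R 1 ≃ {x : R // IsUnit x} where
  toFun v := ⟨v.1 0, v.2.1 0⟩
  invFun x := ⟨fun _ => x.1, fun _ => x.2, by simpa using x.2⟩
  left_inv v := Subtype.ext (funext fun i => by rw [Subsingleton.elim i 0])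
  right_inv x := rfl

private lemma ut_card_eq
    (hloc : ∀ x y : R, ¬ IsUnit x → IsUnit y → IsUnit (x + y)) :
    ∀ k, 1 ≤ k → (Nat.card (UT R k) : ℚ) =
      ∑ j ∈ Finset.range k, (-1 : ℚ)^j * (Nat.card {x : R // ¬ IsUnit x} : ℚ)^j
        * (Nat.card {x : R // IsUnit x} : ℚ)^(k-j) := by
  intro k hk
  induction k, hk using Nat.le_induction with
  | base => simp [Nat.card_congr utOneEquiv]
  | succ k hk ih =>
    have hrec := ut_card_succ (R := R) k hloc
    have hq : (Nat.card (UT R (k+1)) : ℚ)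
        = (Nat.card {x : R // IsUnit x} : ℚ)^(k+1)
          - (Nat.card {x : R // ¬ IsUnit x} : ℚ) * Nat.card (UT R k) := by
      have := congrArg (fun n : ℕ => (n : ℚ)) hrec
      push_cast at this
      linarith
    set u : ℚ := (Nat.card {x : R // IsUnit x} : ℚ) with hu
    set m : ℚ := (Nat.card {x : R // ¬ IsUnit x} : ℚ) with hm
    rw [hq, ih]
    symm
    rw [Finset.sum_range_succ' (fun j => (-1 : ℚ)^j * m^j * u^(k+1-j)) k]
    have hstep : ∀ j ∈ Finset.range k,
        (-1 : ℚ)^(j+1) * m^(j+1) * u^(k+1-(j+1)) = -(m * ((-1)^j * m^j * u^(k-j))) := by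
      intro j hj
      have h1 : k + 1 - (j + 1) = k - j := by omega
      rw [h1]; ring
    rw [Finset.sum_congr rfl hstep]
    rw [Finset.sum_neg_distrib, ← Finset.mul_sum]
    simp only [pow_zero, one_mul, Nat.sub_zero]
    ring

end Local

section PrimePower

variable {A : Type*} [CommRing A] [IsDedekindDomain A] [Module.Free ℤ A] [Module.Finite ℤ A]
variable {P : Ideal A} {e : ℕ}

private lemma isUnit_mk_iff (hPp : P.IsPrime) (hP0 : P ≠ ⊥) (he : 1 ≤ e) (a : A) :
    IsUnit (Ideal.Quotient.mk (P ^ e) a) ↔ a ∉ P := by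
  constructor
  · intro h ha
    obtain ⟨b, hb⟩ := isUnit_iff_exists_inv.mp h
    obtain ⟨b', rfl⟩ := Ideal.Quotient.mk_surjective b
    rw [← map_mul, ← map_one (Ideal.Quotient.mk (P ^ e)),
      Ideal.Quotient.mk_eq_mk_iff_sub_mem] at hb
    have h2 : a * b' - 1 ∈ P := Ideal.pow_le_self (by omega) hb
    have h3 : (1 : A) ∈ P := by
      have := P.sub_mem (P.mul_mem_right b' ha) h2
      simpa using this
    exact hPp.ne_top (P.eq_top_iff_one.mpr h3)
  · intro ha
    have hmax : P.IsMaximal := hPp.isMaximal hP0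
    obtain ⟨b, c, hc, hbc⟩ := hmax.exists_inv ha
    have hnil : IsNilpotent (Ideal.Quotient.mk (P ^ e) c) :=
      ⟨e, by rw [← map_pow, Ideal.Quotient.eq_zero_iff_mem]; exact Ideal.pow_mem_pow hc e⟩
    have hu : IsUnit (Ideal.Quotient.mk (P ^ e) (b * a)) := by
      have hba : b * a = 1 - c := eq_sub_of_add_eq hbc
      rw [hba, map_sub, map_one]
      exact hnil.isUnit_one_sub
    rw [map_mul] at hu
    exact isUnit_of_mul_isUnit_right hu

private lemma quot_hloc (hPp : P.IsPrime) (hP0 : P ≠ ⊥) (he : 1 ≤ e) :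
    ∀ x y : A ⧸ P ^ e, ¬ IsUnit x → IsUnit y → IsUnit (x + y) := by
  intro x y hx hy
  obtain ⟨a, rfl⟩ := Ideal.Quotient.mk_surjective x
  obtain ⟨b, rfl⟩ := Ideal.Quotient.mk_surjective y
  rw [isUnit_mk_iff hPp hP0 he] at hy
  rw [isUnit_mk_iff hPp hP0 he, not_not] at hx
  rw [← map_add, isUnit_mk_iff hPp hP0 he]
  intro hab
  refine hy ?_
  have := P.sub_mem hab hx
  simpa using this

private lemma nonunit_mem_iff (hPp : P.IsPrime) (hP0 : P ≠ ⊥) (he : 1 ≤ e)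
    (x : A ⧸ P ^ e) : ¬ IsUnit x ↔ x ∈ Submodule.map (P ^ e : Ideal A).mkQ P := by
  obtain ⟨a, rfl⟩ := Ideal.Quotient.mk_surjective x
  rw [isUnit_mk_iff hPp hP0 he, not_not]
  constructor
  · intro ha
    exact ⟨a, ha, rfl⟩
  · rintro ⟨b, hb, hba⟩
    have : Ideal.Quotient.mk (P ^ e) b = Ideal.Quotient.mk (P ^ e) a := hba
    rw [Ideal.Quotient.mk_eq_mk_iff_sub_mem] at this
    have h2 : b - a ∈ P := Ideal.pow_le_self (by omega) this
    have := P.sub_mem hb h2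
    simpa using this

private lemma nonunit_card (hPp : P.IsPrime) (hP0 : P ≠ ⊥) (he : 1 ≤ e) :
    Nat.card {x : A ⧸ P ^ e // ¬ IsUnit x} * Ideal.absNorm P = Nat.card (A ⧸ P ^ e) := by
  have h1 : Nat.card {x : A ⧸ P ^ e // ¬ IsUnit x}
      = Nat.card (Submodule.map (P ^ e : Ideal A).mkQ P) :=
    Nat.card_congr (Equiv.subtypeEquivRight (nonunit_mem_iff hPp hP0 he))
  rw [h1, Ideal.absNorm_apply, Submodule.cardQuot_apply]
  exact Submodule.card_quotient_mul_card_quotient P (P ^ e) (Ideal.pow_le_self (by omega))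

private lemma prime_pow_card (hPp : P.IsPrime) (hP0 : P ≠ ⊥) (he : 1 ≤ e)
    (k : ℕ) (hk : 1 ≤ k) :
    (Nat.card (UT (A ⧸ P ^ e) k) : ℚ) =
      (Nat.card {x : A ⧸ P ^ e // IsUnit x} : ℚ) ^ k *
        ∑ j ∈ Finset.range k, (-1 : ℚ) ^ j / ((Ideal.absNorm P : ℚ) - 1) ^ j := by
  have hPe0 : (P ^ e : Ideal A) ≠ ⊥ := by
    rw [← Ideal.zero_eq_bot] at hP0 ⊢
    exact pow_ne_zero e hP0
  haveI : Fintype (A ⧸ P ^ e) := @Fintype.ofFinite _ (Ideal.finiteQuotientOfFreeOfNeBot _ hPe0)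
  haveI : Nontrivial (A ⧸ P ^ e) := Ideal.Quotient.nontrivial_iff.mpr (fun hT => hPp.ne_top
    (eq_top_iff.mpr (hT ▸ Ideal.pow_le_self (by omega : e ≠ 0))))
  haveI : Fintype (A ⧸ P) := @Fintype.ofFinite _ (Ideal.finiteQuotientOfFreeOfNeBot _ hP0)
  haveI : Nontrivial (A ⧸ P) := Ideal.Quotient.nontrivial_iff.mpr hPp.ne_top
  set q : ℕ := Ideal.absNorm P with hqdef
  set m : ℕ := Nat.card {x : A ⧸ P ^ e // ¬ IsUnit x} with hmdef
  set u : ℕ := Nat.card {x : A ⧸ P ^ e // IsUnit x} with hudef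
  have hq2 : 2 ≤ q := by
    have : q = Nat.card (A ⧸ P) := by rw [hqdef, Ideal.absNorm_apply, Submodule.cardQuot_apply]
    rw [this]
    exact Finite.one_lt_card
  have hm0 : m ≠ 0 := by
    rw [hmdef]
    refine Nat.card_ne_zero.mpr ⟨⟨0, not_isUnit_zero⟩, inferInstance⟩
  have hcard : m * q = Nat.card (A ⧸ P ^ e) := nonunit_card hPp hP0 he
  have hsplit : u + m = Nat.card (A ⧸ P ^ e) := card_split _
  have huq : (u : ℚ) = (m : ℚ) * ((q : ℚ) - 1) := by
    have : (u : ℚ) + m = (m : ℚ) * q := by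
      rw_mod_cast [hsplit, hcard]
    linarith
  have hq1 : (q : ℚ) - 1 ≠ 0 := by
    have : (2 : ℚ) ≤ q := by exact_mod_cast hq2
    linarith
  have hmQ : (m : ℚ) ≠ 0 := Nat.cast_ne_zero.mpr hm0
  rw [ut_card_eq (quot_hloc hPp hP0 he) k hk, Finset.mul_sum]
  refine Finset.sum_congr rfl fun j hj => ?_
  have hjk : j ≤ k := (Finset.mem_range.mp hj).le
  have hpow : (u : ℚ) ^ k = (u : ℚ) ^ j * (u : ℚ) ^ (k - j) := by
    rw [← pow_add, Nat.add_sub_cancel' hjk]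
  rw [hpow, huq, mul_pow, mul_pow]
  field_simp
  ring

end PrimePower

open NumberField

set_option synthInstance.maxHeartbeats 1000000
set_option maxHeartbeats 1000000

/-- The `k`-dimensional generalized Euler function in the ring of algebraic
integers: for a nonzero ideal `𝔫` of `𝓞 K`, the number `φ_k(𝔫)` of `k`-tuples of
units of `𝓞 K ⧸ 𝔫` whose sum is a unit equals
`φ(𝔫)^k · ∏_{𝔭 ∣ 𝔫} (1 − 1/(N(𝔭)−1) + ⋯ + (−1)^{k−1}/(N(𝔭)−1)^{k−1})`. -/
theorem phi_k_formula_ideal (K : Type*) [Field K] [NumberField K]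
    (k : ℕ) (hk : 0 < k) (𝔫 : Ideal (𝓞 K)) (h𝔫 : 𝔫 ≠ ⊥) :
    (Nat.card {v : Fin k → (𝓞 K ⧸ 𝔫)ˣ //
        IsUnit (∑ i, (v i : 𝓞 K ⧸ 𝔫))} : ℚ) =
      (Nat.card ((𝓞 K ⧸ 𝔫)ˣ) : ℚ) ^ k *
        ∏ᶠ (𝔭 : Ideal (𝓞 K)) (_ : 𝔭.IsPrime ∧ 𝔭 ∣ 𝔫),
          ∑ j ∈ Finset.range k, (-1 : ℚ) ^ j / ((Ideal.absNorm 𝔭 : ℚ) - 1) ^ j := by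
  classical
  set A := 𝓞 K
  set s : Finset (Ideal A) := (UniqueFactorizationMonoid.factors 𝔫).toFinset with hs
  set F : Ideal A → ℚ := fun 𝔭 =>
    ∑ j ∈ Finset.range k, (-1 : ℚ) ^ j / ((Ideal.absNorm 𝔭 : ℚ) - 1) ^ j with hF
  -- facts about members of s
  have hmem : ∀ P ∈ s, Prime P := fun P hP =>
    UniqueFactorizationMonoid.prime_of_factor _ (Multiset.mem_toFinset.mp hP)
  have hPrime : ∀ P ∈ s, (P : Ideal A).IsPrime := fun P hP =>
    Ideal.isPrime_of_prime (hmem P hP)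
  have hbot : ∀ P ∈ s, P ≠ ⊥ := fun P hP => by
    have := (hmem P hP).ne_zero
    rwa [Ideal.zero_eq_bot] at this
  have hcount : ∀ P ∈ s, 1 ≤ (UniqueFactorizationMonoid.factors 𝔫).count P := fun P hP =>
    Multiset.count_pos.mpr (Multiset.mem_toFinset.mp hP)
  -- CRT
  let E := IsDedekindDomain.quotientEquivPiFactors h𝔫
  -- counting chain for the main count
  have hN : ∀ k' : ℕ, Nat.card (UT (A ⧸ 𝔫) k') =
      ∏ P ∈ s, Nat.card (UT (A ⧸ (P : Ideal A) ^
        (UniqueFactorizationMonoid.factors 𝔫).count P) k') := by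
    intro k'
    rw [Nat.card_congr ((utCongr E k').trans (utPiEquiv _ k')), Nat.card_pi,
      ← Finset.prod_coe_sort s]
  -- per-prime formula
  have hlocal : ∀ P ∈ s,
      (Nat.card (UT (A ⧸ (P : Ideal A) ^
        (UniqueFactorizationMonoid.factors 𝔫).count P) k) : ℚ) =
      (Nat.card {x : A ⧸ (P : Ideal A) ^
        (UniqueFactorizationMonoid.factors 𝔫).count P // IsUnit x} : ℚ) ^ k * F P :=
    fun P hP => prime_pow_card (hPrime P hP) (hbot P hP) (hcount P hP) k hk
  -- units card
  have hU : (Nat.card ((A ⧸ 𝔫)ˣ) : ℚ) = ∏ P ∈ s,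
      (Nat.card {x : A ⧸ (P : Ideal A) ^
        (UniqueFactorizationMonoid.factors 𝔫).count P // IsUnit x} : ℚ) := by
    have h1 : Nat.card ((A ⧸ 𝔫)ˣ) = Nat.card (UT (A ⧸ 𝔫) 1) :=
      Nat.card_congr ((unitsEquivSubtype _).trans utOneEquiv.symm)
    rw [h1, hN 1]
    push_cast
    exact Finset.prod_congr rfl fun P hP =>
      congrArg _ (Nat.card_congr utOneEquiv)
  -- the finprod is the finset product
  have hfin : (∏ᶠ (𝔭 : Ideal A) (_ : 𝔭.IsPrime ∧ 𝔭 ∣ 𝔫), F 𝔭) = ∏ 𝔭 ∈ s, F 𝔭 := by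
    refine finprod_cond_eq_prod_of_cond_iff F fun {p} => ?_
    rw [hs, Multiset.mem_toFinset, UniqueFactorizationMonoid.factors_eq_normalizedFactors,
      Ideal.mem_normalizedFactors_iff h𝔫, Ideal.dvd_iff_le]
    try exact fun _ => Iff.rfl
  -- main computation
  have hstart : Nat.card {v : Fin k → (A ⧸ 𝔫)ˣ // IsUnit (∑ i, (v i : A ⧸ 𝔫))}
      = Nat.card (UT (A ⧸ 𝔫) k) := Nat.card_congr (utEquiv _ k)
  rw [hstart, hN k, hfin, hU, ← Finset.prod_pow, ← Finset.prod_mul_distrib]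
  push_cast
  exact Finset.prod_congr rfl fun P hP => by
    rw [hlocal P hP]
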